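/- For every integer n ≥ 4, the number of equivalence classes of Conway sequences of n under reversal equals the number of equivalence classes of binary strings of length n−3 under reversal; that is, the counting sequence of rational knots and links with n crossings coincides (with shift 3) with the sequence A005418. -/

import Mathlib

/-- A Conway sequence of `n`: a nonempty list of positive integers summing to `n`
whose first and last entries are both at least 2. -/
def IsConwaySeq (n : ℕ) (l : List ℕ) : Prop :=
  l ≠ [] ∧ (∀ x ∈ l, 0 < x) ∧ l.sum = n ∧ 2 ≤ l.headI ∧ 2 ≤ l.getLastI

/-- Composition of `bs.length + 1` from a list of "cut" bits. -/
def comp : List Bool → List ℕ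
  | [] => [1]
  | true :: t => 1 :: comp t
  | false :: t => ((comp t).headI + 1) :: (comp t).tail

theorem comp_ne_nil (bs : List Bool) : comp bs ≠ [] := by
  cases bs with
  | nil => simp [comp]
  | cons b t => cases b <;> simp [comp]

theorem comp_cons_tail (bs : List Bool) : (comp bs).headI :: (comp bs).tail = comp bs := by
  obtain ⟨a, r, h⟩ := List.exists_cons_of_ne_nil (comp_ne_nil bs)
  rw [h]; rfl

theorem comp_pos (bs : List Bool) : ∀ x ∈ comp bs, 0 < x := by
  induction bs with
  | nil => simp [comp]
  | cons b t ih =>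
    cases b with
    | true => simpa [comp] using ih
    | false =>
      intro x hx
      rw [comp] at hx
      rcases hx with h | h
      · omega
      · exact ih x (List.mem_of_mem_tail ‹_›)

theorem comp_sum (bs : List Bool) : (comp bs).sum = bs.length + 1 := by
  induction bs with
  | nil => simp [comp]
  | cons b t ih =>
    cases b with
    | true => simp [comp, ih]; omega
    | false =>
      have h := comp_cons_tail t
      rw [comp, List.sum_cons]
      have : (comp t).headI + (comp t).tail.sum = (comp t).sum := by
        conv_rhs => rw [← h]
        simp
      simp only [List.length_cons]
      omega

theorem comp_snoc_true (u : List Bool) : comp (u ++ [true]) = comp u ++ [1] := by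
  induction u with
  | nil => rfl
  | cons b t ih =>
    cases b with
    | true => simp [comp, ih]
    | false =>
      obtain ⟨a, r, h⟩ := List.exists_cons_of_ne_nil (comp_ne_nil t)
      simp [comp, ih, h]

theorem comp_snoc_false (u : List Bool) (m : List ℕ) (x : ℕ) (h : comp u = m ++ [x]) :
    comp (u ++ [false]) = m ++ [x + 1] := by
  induction u generalizing m x with
  | nil =>
    rw [comp] at h
    cases m with
    | nil => simp at h; subst h; rfl
    | cons y m' =>
      exfalso
      have : ([1] : List ℕ).length = (y :: m' ++ [x]).length := by rw [h]
      simp at this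
  | cons b t ih =>
    cases b with
    | true =>
      rw [comp] at h
      cases m with
      | nil =>
        exfalso
        simp only [List.nil_append, List.cons.injEq] at h
        exact comp_ne_nil t h.2
      | cons y m' =>
        simp only [List.cons_append, List.cons.injEq] at h
        rw [List.cons_append, comp, ih m' x h.2, h.1, List.cons_append]
    | false =>
      obtain ⟨a, r, hc⟩ := List.exists_cons_of_ne_nil (comp_ne_nil t)
      rw [comp, hc] at h
      simp only [List.headI, List.tail] at h
      cases m with
      | nil =>
        simp only [List.nil_append, List.cons.injEq] at h
        have h2 := ih [] a (by rw [hc, h.2]; rfl)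
        rw [List.cons_append, comp, h2]
        simp only [List.headI, List.tail, List.nil_append, List.cons.injEq, and_true]
        omega
      | cons y m' =>
        simp only [List.cons_append, List.cons.injEq] at h
        have h2 := ih (a :: m') x (by rw [hc, h.2]; rfl)
        rw [List.cons_append, comp, h2]
        simp only [List.cons_append, List.headI, List.tail, List.cons.injEq, and_true]
        omega

theorem comp_reverse (bs : List Bool) : comp bs.reverse = (comp bs).reverse := by
  induction bs with
  | nil => rfl
  | cons b t ih =>
    cases b with
    | true =>
      rw [List.reverse_cons, comp_snoc_true, ih, comp]
      simp
    | false =>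
      obtain ⟨a, r, hc⟩ := List.exists_cons_of_ne_nil (comp_ne_nil t)
      rw [List.reverse_cons,
        comp_snoc_false t.reverse r.reverse a (by rw [ih, hc]; simp), comp, hc]
      simp

theorem comp_headI_pos (bs : List Bool) : 0 < (comp bs).headI := by
  obtain ⟨a, r, h⟩ := List.exists_cons_of_ne_nil (comp_ne_nil bs)
  rw [h]
  exact comp_pos bs a (by rw [h]; exact List.mem_cons_self)

theorem comp_injective : Function.Injective comp := by
  intro bs bs' h
  induction bs generalizing bs' with
  | nil =>
    cases bs' with
    | nil => rfl
    | cons b' t' =>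
      exfalso
      cases b' with
      | true =>
        rw [comp, comp] at h
        obtain ⟨a, r, hc⟩ := List.exists_cons_of_ne_nil (comp_ne_nil t')
        rw [hc] at h
        simp at h
      | false =>
        rw [comp, comp] at h
        have := comp_headI_pos t'
        simp only [List.cons.injEq] at h
        omega
  | cons b t ih =>
    cases bs' with
    | nil =>
      exfalso
      cases b with
      | true =>
        rw [comp, comp] at h
        obtain ⟨a, r, hc⟩ := List.exists_cons_of_ne_nil (comp_ne_nil t)
        rw [hc] at h
        simp at h
      | false =>
        rw [comp, comp] at h
        have := comp_headI_pos t
        simp only [List.cons.injEq] at h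
        omega
    | cons b' t' =>
      cases b with
      | true =>
        cases b' with
        | true =>
          rw [comp, comp] at h
          simp only [List.cons.injEq] at h
          rw [ih h.2]
        | false =>
          exfalso
          rw [comp, comp] at h
          have := comp_headI_pos t'
          simp only [List.cons.injEq] at h
          omega
      | false =>
        cases b' with
        | true =>
          exfalso
          rw [comp, comp] at h
          have := comp_headI_pos t
          simp only [List.cons.injEq] at h
          omega
        | false =>
          rw [comp, comp] at h
          simp only [List.cons.injEq] at h
          have : comp t = comp t' := by
            rw [← comp_cons_tail t, ← comp_cons_tail t', h.2]
            congr 1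
            omega
          rw [ih this]

theorem comp_surj : ∀ N l, l.sum = N → l ≠ [] → (∀ x ∈ l, 0 < x) → ∃ bs, comp bs = l := by
  intro N
  induction N using Nat.strong_induction_on with
  | _ N IH =>
    intro l hsum hne hpos
    cases l with
    | nil => exact (hne rfl).elim
    | cons a t =>
      have ha : 0 < a := hpos a List.mem_cons_self
      match a, ha with
      | 1, _ =>
        cases t with
        | nil => exact ⟨[], rfl⟩
        | cons c s =>
          have hlt : (c :: s).sum < N := by simp at hsum ⊢; omega
          obtain ⟨bs, hbs⟩ := IH _ hlt (c :: s) rfl (by simp) (fun x hx => hpos x (List.mem_cons_of_mem _ hx))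
          exact ⟨true :: bs, by rw [comp, hbs]⟩
      | (k + 2), _ =>
        have hlt : ((k + 1) :: t).sum < N := by simp at hsum ⊢; omega
        obtain ⟨bs, hbs⟩ := IH _ hlt ((k + 1) :: t) rfl (by simp)
          (by intro x hx; rcases List.mem_cons.1 hx with rfl | hx; omega
              exact hpos x (List.mem_cons_of_mem _ hx))
        exact ⟨false :: bs, by rw [comp, hbs]; rfl⟩

theorem getLastI_eq_reverse_headI (l : List ℕ) : l.getLastI = l.reverse.headI := by
  cases hl : l.reverse with
  | nil => rw [List.reverse_eq_nil_iff] at hl; subst hl; rfl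
  | cons a r =>
    have : l = r.reverse ++ [a] := by
      rw [← List.reverse_reverse l, hl, List.reverse_cons]
    rw [this, List.getLastI_eq_getLast?, List.getLast?_concat]
    rfl

theorem ofFn_reverse {m : ℕ} (s : Fin m → Bool) :
    (List.ofFn s).reverse = List.ofFn (s ∘ Fin.rev) := by
  apply List.ext_getElem
  · simp
  · intro i h1 h2
    simp only [List.getElem_reverse, List.getElem_ofFn, Function.comp_apply]
    congr 1
    simp only [List.length_reverse, List.length_ofFn] at h1 ⊢
    ext
    simp [Fin.rev]
    omega

theorem comp_false_cons_headI (u : List Bool) :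
    (comp (false :: u)).headI = (comp u).headI + 1 := by
  rw [comp]; rfl

theorem conway_of_string (n : ℕ) (hn : 4 ≤ n) (s : Fin (n - 3) → Bool) :
    IsConwaySeq n (comp (false :: List.ofFn s ++ [false])) := by
  refine ⟨comp_ne_nil _, comp_pos _, ?_, ?_, ?_⟩
  · rw [comp_sum]
    simp
    omega
  · rw [show (false :: List.ofFn s ++ [false]) = false :: (List.ofFn s ++ [false]) from rfl,
      comp_false_cons_headI]
    have := comp_headI_pos (List.ofFn s ++ [false])
    omega
  · rw [getLastI_eq_reverse_headI, ← comp_reverse]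
    rw [show (false :: List.ofFn s ++ [false]).reverse
        = false :: ((List.ofFn s).reverse ++ [false]) by simp, comp_false_cons_headI]
    have := comp_headI_pos ((List.ofFn s).reverse ++ [false])
    omega

theorem exists_ofFn (m : ℕ) (L : List Bool) (h : L.length = m) :
    ∃ s : Fin m → Bool, List.ofFn s = L := by
  subst h
  exact ⟨L.get, List.ofFn_get L⟩

theorem F_list_inj {m : ℕ} {s t : Fin m → Bool}
    (h : comp (false :: List.ofFn s ++ [false]) = comp (false :: List.ofFn t ++ [false])) :
    s = t := by
  have h2 := comp_injective h
  simp only [List.cons.injEq, List.append_left_inj, true_and] at h2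
  exact List.ofFn_injective h2

/-- For every `n ≥ 4`, the number of equivalence classes of Conway sequences of `n`
under reversal equals the number of equivalence classes of binary strings of length
`n - 3` under reversal (the sequence A005418, shifted by 3). -/
theorem rational_KL_count_eq_A005418 (n : ℕ) (hn : 4 ≤ n) :
    Nat.card (Quot (fun a b : {l : List ℕ // IsConwaySeq n l} =>
        a.1 = b.1 ∨ a.1 = b.1.reverse)) =
      Nat.card (Quot (fun f g : Fin (n - 3) → Bool => f = g ∨ f = g ∘ Fin.rev)) := by
  set F : (Fin (n - 3) → Bool) → {l : List ℕ // IsConwaySeq n l} :=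
    fun s => ⟨comp (false :: List.ofFn s ++ [false]), conway_of_string n hn s⟩ with hF
  have hinj : Function.Injective F := by
    intro s t h
    exact F_list_inj (congrArg Subtype.val h)
  have hrev : ∀ t : Fin (n - 3) → Bool,
      (F t).1.reverse = comp (false :: List.ofFn (t ∘ Fin.rev) ++ [false]) := by
    intro t
    show (comp (false :: List.ofFn t ++ [false])).reverse = _
    rw [← comp_reverse]
    congr 1
    rw [← ofFn_reverse]
    simp
  have hsurj : Function.Surjective F := by
    rintro ⟨l, hne, hpos, hsum, hhead, hlast⟩
    obtain ⟨bs, hbs⟩ := comp_surj l.sum l rfl hne hpos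
    have hlen : bs.length + 1 = n := by rw [← comp_sum bs, hbs, hsum]
    cases bs with
    | nil => simp at hlen; omega
    | cons b t =>
      cases b with
      | true =>
        exfalso
        rw [comp] at hbs
        rw [← hbs] at hhead
        simp at hhead
      | false =>
        rcases t.eq_nil_or_concat with rfl | ⟨mid, c, rfl⟩
        · rw [List.length_cons, List.length_nil] at hlen; omega
        cases c with
        | true =>
          exfalso
          rw [getLastI_eq_reverse_headI, ← hbs, ← comp_reverse] at hlast
          rw [show (false :: mid.concat true).reverse
              = true :: (mid.reverse ++ [false]) by simp] at hlast
          rw [comp] at hlast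
          simp at hlast
        | false =>
          have hm : mid.length = n - 3 := by
            simp only [List.length_cons, List.concat_eq_append, List.length_append,
              List.length_nil] at hlen
            omega
          obtain ⟨s, hs⟩ := exists_ofFn (n - 3) mid hm
          refine ⟨s, Subtype.ext ?_⟩
          show comp (false :: List.ofFn s ++ [false]) = l
          rw [hs, ← hbs, List.concat_eq_append]
          rfl
  have hrel : ∀ s t : Fin (n - 3) → Bool,
      (s = t ∨ s = t ∘ Fin.rev) ↔ ((F s).1 = (F t).1 ∨ (F s).1 = (F t).1.reverse) := by
    intro s t
    constructor
    · rintro (rfl | rfl)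
      · exact Or.inl rfl
      · right
        rw [hrev t]
    · rintro (h | h)
      · exact Or.inl (F_list_inj h)
      · right
        rw [hrev t] at h
        exact F_list_inj h
  exact (Nat.card_congr (Quot.congr (Equiv.ofBijective F ⟨hinj, hsurj⟩) hrel)).symm
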